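/- Let d > m > 2 and let g_t(z) = z^d + t z^(m-1) + Σ_{i=2}^m (α_i t + β_i) z^(m-i) with α_2 ≠ 0. Let P(t), Q(t) ∈ ℂ[t] each have t-degree d^(n-2) for some n > 2 (arising as P = g_t^(n-1)(c_m), Q = g_t^(n-1)(c_{m+1})). If g_t(P(t)) = g_t(Q(t)) as polynomials in t, then there is a d-th root of unity ζ with P = ζ·Q. -/

import Mathlib

open Polynomial

private lemma stmt10_arith (m d k : ℕ) (hm : 2 < m) (hd : m < d) (hk : 1 < k) :
    (m - 1) * k + 1 < (d - 1) * k := by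
  obtain ⟨a, rfl⟩ : ∃ a, m = a + 3 := ⟨m - 3, by omega⟩
  obtain ⟨b, rfl⟩ : ∃ b, d = a + 4 + b := ⟨d - (a + 4), by omega⟩
  have h1 : a + 3 - 1 = a + 2 := by omega
  have h2 : a + 4 + b - 1 = a + 3 + b := by omega
  rw [h1, h2]
  nlinarith

theorem stmt10 (d m : ℕ) (hm : 2 < m) (hd : m < d) (α β : ℕ → ℂ) (hα : α 2 ≠ 0)
    (g : Polynomial (Polynomial ℂ))
    (hg : g = X ^ d + C X * X ^ (m - 1) +
      ∑ i ∈ Finset.Icc 2 m, C (C (α i) * X + C (β i)) * X ^ (m - i))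
    (n : ℕ) (hn : 2 < n) (P Q : Polynomial ℂ)
    (hP : P.natDegree = d ^ (n - 2)) (hQ : Q.natDegree = d ^ (n - 2))
    (heq : g.eval P = g.eval Q) :
    ∃ ζ : ℂ, ζ ^ d = 1 ∧ P = C ζ * Q := by
  set k := d ^ (n - 2) with hk
  have hdk : d ≤ k := Nat.le_self_pow (by omega) d
  have hk1 : 1 < k := lt_of_lt_of_le (by omega) hdk
  have hP0 : P ≠ 0 := fun h => by rw [h, natDegree_zero] at hP; omega
  have hQ0 : Q ≠ 0 := fun h => by rw [h, natDegree_zero] at hQ; omega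
  set p := P.leadingCoeff with hp
  set q := Q.leadingCoeff with hq
  have hp0 : p ≠ 0 := leadingCoeff_ne_zero.mpr hP0
  have hq0 : q ≠ 0 := leadingCoeff_ne_zero.mpr hQ0
  -- simplify the evaluation hypothesis
  rw [hg] at heq
  simp only [eval_add, eval_mul, eval_pow, eval_C, eval_X, eval_finset_sum] at heq
  -- the difference P^d - Q^d equals a low-degree polynomial R
  have hPQR : P ^ d - Q ^ d = X * (Q ^ (m - 1) - P ^ (m - 1)) +
      ∑ i ∈ Finset.Icc 2 m, (C (α i) * X + C (β i)) * (Q ^ (m - i) - P ^ (m - i)) := by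
    rw [show (∑ i ∈ Finset.Icc 2 m, (C (α i) * X + C (β i)) * (Q ^ (m - i) - P ^ (m - i)))
        = (∑ i ∈ Finset.Icc 2 m, (C (α i) * X + C (β i)) * Q ^ (m - i))
          - (∑ i ∈ Finset.Icc 2 m, (C (α i) * X + C (β i)) * P ^ (m - i)) by
      rw [← Finset.sum_sub_distrib]; exact Finset.sum_congr rfl fun i _ => mul_sub _ _ _]
    linear_combination heq
  set R : Polynomial ℂ := X * (Q ^ (m - 1) - P ^ (m - 1)) +
      ∑ i ∈ Finset.Icc 2 m, (C (α i) * X + C (β i)) * (Q ^ (m - i) - P ^ (m - i)) with hR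
  have hRdeg : R.natDegree ≤ (m - 1) * k + 1 := by
    apply le_trans (natDegree_add_le _ _)
    apply max_le
    · refine le_trans natDegree_mul_le ?_
      have h1 : (Q ^ (m - 1) - P ^ (m - 1)).natDegree ≤ (m - 1) * k :=
        le_trans (natDegree_sub_le _ _)
          (by simp [natDegree_pow, hP, hQ])
      rw [natDegree_X]
      omega
    · refine natDegree_sum_le_of_forall_le _ _ fun i hi => ?_
      rw [Finset.mem_Icc] at hi
      refine le_trans natDegree_mul_le ?_
      have h1 : (C (α i) * X + C (β i)).natDegree ≤ 1 := by
        refine le_trans (natDegree_add_le _ _) ?_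
        simp [natDegree_C]
        exact le_trans (natDegree_C_mul_le _ _) (le_of_eq natDegree_X)
      have h2 : (Q ^ (m - i) - P ^ (m - i)).natDegree ≤ (m - i) * k :=
        le_trans (natDegree_sub_le _ _)
          (by simp [natDegree_pow, hP, hQ])
      have h3 : (m - i) * k ≤ (m - 1) * k := Nat.mul_le_mul_right k (by omega)
      omega
  -- leading coefficients satisfy p^d = q^d
  have hmdk : (m - 1) * k + 1 < (d - 1) * k := stmt10_arith m d k hm hd hk1
  have hd1k : (d - 1) * k ≤ d * k := Nat.mul_le_mul_right k (by omega)
  have hpd : p ^ d = q ^ d := by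
    have h1 : (P ^ d).coeff (d * k) = p ^ d := by
      have hdeg : (P ^ d).natDegree = d * k := by rw [natDegree_pow, hP]
      rw [← hdeg, coeff_natDegree, leadingCoeff_pow]
    have h2 : (Q ^ d).coeff (d * k) = q ^ d := by
      have hdeg : (Q ^ d).natDegree = d * k := by rw [natDegree_pow, hQ]
      rw [← hdeg, coeff_natDegree, leadingCoeff_pow]
    have h3 : R.coeff (d * k) = 0 :=
      coeff_eq_zero_of_natDegree_lt (lt_of_le_of_lt hRdeg (by omega))
    have h4 : (P ^ d - Q ^ d).coeff (d * k) = R.coeff (d * k) := by rw [hPQR]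
    rw [coeff_sub, h1, h2, h3] at h4
    exact sub_eq_zero.mp h4
  refine ⟨p / q, ?_, ?_⟩
  · rw [div_pow, hpd, div_self (pow_ne_zero _ hq0)]
  set ζ := p / q with hζdef
  have hζ0 : ζ ≠ 0 := div_ne_zero hp0 hq0
  have hζd : ζ ^ d = 1 := by rw [hζdef, div_pow, hpd, div_self (pow_ne_zero _ hq0)]
  set T : Polynomial ℂ := C ζ * Q with hT
  have hT0 : T ≠ 0 := mul_ne_zero (by simpa using hζ0) hQ0
  have hTlead : T.leadingCoeff = p := by
    rw [hT, leadingCoeff_mul, leadingCoeff_C, hζdef, div_mul_cancel₀ _ hq0]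
  have hTdeg : T.natDegree = k := by rw [hT, natDegree_C_mul hζ0, hQ]
  have hTd : T ^ d = Q ^ d := by
    rw [hT, mul_pow, ← C_pow, hζd, map_one, one_mul]
  by_contra hne
  have hPT : P - T ≠ 0 := sub_ne_zero.mpr hne
  set S : Polynomial ℂ := ∑ i ∈ Finset.range d, P ^ i * T ^ (d - 1 - i) with hS
  have hgeom : S * (P - T) = R := by
    rw [hS, geom_sum₂_mul, hTd, hPQR]
  have hScoeff : S.coeff ((d - 1) * k) = d * p ^ (d - 1) := by
    rw [hS, finset_sum_coeff]
    have hterm : ∀ i ∈ Finset.range d,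
        (P ^ i * T ^ (d - 1 - i)).coeff ((d - 1) * k) = p ^ (d - 1) := by
      intro i hi
      rw [Finset.mem_range] at hi
      have hdeg : (P ^ i * T ^ (d - 1 - i)).natDegree = (d - 1) * k := by
        rw [natDegree_mul (pow_ne_zero _ hP0) (pow_ne_zero _ hT0),
          natDegree_pow, natDegree_pow, hP, hTdeg, ← add_mul]
        congr 1
        omega
      rw [← hdeg, coeff_natDegree, leadingCoeff_mul, leadingCoeff_pow, leadingCoeff_pow,
        hTlead, ← hp, ← pow_add]
      congr 1
      omega
    rw [Finset.sum_congr rfl hterm, Finset.sum_const, Finset.card_range, nsmul_eq_mul]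
  have hSne : S.coeff ((d - 1) * k) ≠ 0 := by
    rw [hScoeff]
    exact mul_ne_zero (Nat.cast_ne_zero.mpr (by omega)) (pow_ne_zero _ hp0)
  have hS0 : S ≠ 0 := fun h => hSne (by rw [h, coeff_zero])
  have hSdeg : (d - 1) * k ≤ S.natDegree := le_natDegree_of_ne_zero hSne
  have hfinal : R.natDegree = S.natDegree + (P - T).natDegree := by
    rw [← hgeom, natDegree_mul hS0 hPT]
  omega
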